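/- Let (d_n)_{n∈ℕ} be a sequence of integers with d_n ≥ 2 and let (F_n)_{n∈ℕ} be a sequence of finite fields. Regard SL(d_n, F_n) as a subgroup of SL(d_n + 1, F_n) via the block-diagonal embedding A ↦ diag(A, 1) (a matrix acting as A on the first d_n coordinates and fixing the last basis vector). Then ∏_{n∈ℕ} SL(d_n + 1, F_n) is finitely generated over the subgroup ∏_{n∈ℕ} SL(d_n, F_n): there exists a finite subset S of ∏_n SL(d_n + 1, F_n) such that ∏_n SL(d_n + 1, F_n) is generated by (the image of) ∏_n SL(d_n, F_n) together with S. -/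

import Mathlib

/-- The block-diagonal embedding `A ↦ diag(A, 1)` of `d × d` matrices into
`(d+1) × (d+1)` matrices. -/
def embedMat {d : ℕ} {F : Type*} [Zero F] [One F] (A : Matrix (Fin d) (Fin d) F) :
    Matrix (Fin (d + 1)) (Fin (d + 1)) F :=
  Matrix.of fun i j =>
    if hi : (i : ℕ) < d then
      (if hj : (j : ℕ) < d then A ⟨i, hi⟩ ⟨j, hj⟩ else 0)
    else (if (j : ℕ) < d then 0 else 1)

namespace Prod14

open Matrix

variable {d : ℕ} {F : Type*} [Field F]

/-- index type for the block world -/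
abbrev ιd (d : ℕ) := Sum (Fin d) (Fin 1)

/-- standard basis vector e₀, defined without `NeZero` -/
def e0 (d : ℕ) (F : Type*) [Zero F] [One F] : Fin d → F :=
  fun i => if (i : ℕ) = 0 then 1 else 0

lemma e0_eq [NeZero d] : e0 d F = Pi.single (0 : Fin d) 1 := by
  funext i
  by_cases h : i = 0
  · subst h; simp [e0]
  · have : (i : ℕ) ≠ 0 := fun hc => h (Fin.ext (by simpa using hc))
    simp [e0, this, Pi.single_apply, h]

/-- block-diagonal embedding as a group hom into `SL(ιd d)`. -/
def embedHom : Matrix.SpecialLinearGroup (Fin d) F →* Matrix.SpecialLinearGroup (ιd d) F where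
  toFun A := ⟨fromBlocks A.1 0 0 1, by rw [det_fromBlocks_zero₂₁]; simp [A.2]⟩
  map_one' := Subtype.ext (by simp [fromBlocks_one])
  map_mul' A B := Subtype.ext (by change _ = fromBlocks A.1 0 0 1 * fromBlocks B.1 0 0 1; simp [fromBlocks_multiply, Matrix.SpecialLinearGroup.coe_mul])

lemma embedHom_coe (A : Matrix.SpecialLinearGroup (Fin d) F) :
    (embedHom A : Matrix (ιd d) (ιd d) F) = fromBlocks A.1 0 0 1 := rfl

/-- upper block transvection-type matrices -/
def Umat (x : Fin d → F) : Matrix.SpecialLinearGroup (ιd d) F :=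
  ⟨fromBlocks 1 (replicateCol (Fin 1) x) 0 1, by rw [det_fromBlocks_zero₂₁]; simp⟩

/-- lower block transvection-type matrices -/
def Lmat (x : Fin d → F) : Matrix.SpecialLinearGroup (ιd d) F :=
  ⟨fromBlocks 1 0 (replicateRow (Fin 1) x) 1, by rw [det_fromBlocks_zero₁₂]; simp⟩

lemma Umat_coe (x : Fin d → F) :
    (Umat x : Matrix (ιd d) (ιd d) F) = fromBlocks 1 (replicateCol (Fin 1) x) 0 1 := rfl

lemma Lmat_coe (x : Fin d → F) :
    (Lmat x : Matrix (ιd d) (ιd d) F) = fromBlocks 1 0 (replicateRow (Fin 1) x) 1 := rfl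

/-- the elementary matrix E -/
def Eb (d : ℕ) (F : Type*) [Field F] : Matrix.SpecialLinearGroup (ιd d) F := Umat (e0 d F)

/-- the elementary matrix E' -/
def E'b (d : ℕ) (F : Type*) [Field F] : Matrix.SpecialLinearGroup (ιd d) F := Lmat (e0 d F)

lemma col_add' (x y : Fin d → F) : replicateCol (Fin 1) (x + y) = replicateCol (Fin 1) x + replicateCol (Fin 1) y := by
  ext i j; simp [replicateCol_apply]

lemma Umat_mul (x y : Fin d → F) : Umat x * Umat y = Umat (x + y) := by
  apply Subtype.ext
  rw [Matrix.SpecialLinearGroup.coe_mul, Umat_coe, Umat_coe, Umat_coe, fromBlocks_multiply]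
  simp only [Matrix.mul_one, Matrix.one_mul, Matrix.mul_zero, Matrix.zero_mul, add_zero,
    zero_add, col_add']
  rw [add_comm (replicateCol (Fin 1) y) (replicateCol (Fin 1) x)]

lemma Umat_zero : (Umat 0 : Matrix.SpecialLinearGroup (ιd d) F) = 1 := by
  apply Subtype.ext
  have : replicateCol (Fin 1) (0 : Fin d → F) = 0 := by ext i j; simp [replicateCol_apply]
  simp [Umat_coe, this, fromBlocks_one]

lemma Umat_inv (x : Fin d → F) : (Umat x)⁻¹ = Umat (-x) := by
  have : Umat x * Umat (-x) = 1 := by rw [Umat_mul]; simp [Umat_zero]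
  exact inv_eq_of_mul_eq_one_right this

lemma row_add' (x y : Fin d → F) : replicateRow (Fin 1) (x + y) = replicateRow (Fin 1) x + replicateRow (Fin 1) y := by
  ext i j; simp [replicateRow_apply]

lemma Lmat_mul (x y : Fin d → F) : Lmat x * Lmat y = Lmat (x + y) := by
  apply Subtype.ext
  rw [Matrix.SpecialLinearGroup.coe_mul, Lmat_coe, Lmat_coe, Lmat_coe, fromBlocks_multiply]
  simp only [Matrix.mul_one, Matrix.one_mul, Matrix.mul_zero, Matrix.zero_mul, add_zero,
    zero_add, row_add']

lemma Lmat_zero : (Lmat 0 : Matrix.SpecialLinearGroup (ιd d) F) = 1 := by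
  apply Subtype.ext
  have : replicateRow (Fin 1) (0 : Fin d → F) = 0 := by ext i j; simp [replicateRow_apply]
  simp [Lmat_coe, this, fromBlocks_one]

lemma Lmat_inv (x : Fin d → F) : (Lmat x)⁻¹ = Lmat (-x) := by
  have : Lmat x * Lmat (-x) = 1 := by rw [Lmat_mul]; simp [Lmat_zero]
  exact inv_eq_of_mul_eq_one_right this

lemma col_mul_row_apply' (u v : Fin d → F) (i j : Fin d) :
    (replicateCol (Fin 1) u * replicateRow (Fin 1) v) i j = u i * v j := by
  simp [mul_apply, replicateCol_apply, replicateRow_apply]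

lemma mul_col' (A : Matrix (Fin d) (Fin d) F) (v : Fin d → F) :
    A * replicateCol (Fin 1) v = replicateCol (Fin 1) (A *ᵥ v) := by
  ext i j
  simp [mul_apply, replicateCol_apply, mulVec, dotProduct]

section trans

/-- Transitivity of `SL(d, F)` on nonzero vectors, in the form: every nonzero `w`
is the image of `e0` under some special linear matrix. -/
lemma exists_SL_mulVec (hd : 2 ≤ d) (w : Fin d → F) (hw : w ≠ 0) :
    ∃ A : Matrix.SpecialLinearGroup (Fin d) F, A.1 *ᵥ e0 d F = w := by
  haveI : NeZero d := ⟨by omega⟩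
  obtain ⟨j, hj⟩ : ∃ j, w j ≠ 0 := Function.ne_iff.mp hw
  have h01 : (0 : Fin d) ≠ 1 := by
    have hv1 : ((1 : Fin d) : ℕ) = 1 := by
      rw [Fin.val_one']; exact Nat.mod_eq_of_lt (by omega)
    intro hc
    rw [Fin.ext_iff, Fin.val_zero, hv1] at hc
    exact absurd hc (by omega)
  set u : Fin d → F := Pi.single j 1 with hu
  set B : Matrix (Fin d) (Fin d) F :=
    1 + replicateCol (Fin 1) (w - u) * replicateRow (Fin 1) u with hB
  have hdetB : B.det = w j := by
    rw [hB]; erw [det_one_add_replicateCol_mul_replicateRow]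
    simp [hu, single_dotProduct]
  have hBcol : B *ᵥ u = w := by
    funext k
    rw [hB, add_mulVec, one_mulVec]
    have hcr : (replicateCol (Fin 1) (w - u) * replicateRow (Fin 1) u) *ᵥ u = w - u := by
      funext i
      simp only [mulVec, dotProduct, col_mul_row_apply']
      rw [Finset.sum_eq_single j]
      · simp [hu]
      · intro b _ hb; simp [hu, Pi.single_apply, hb]
      · intro h; simp at h
    rw [hcr]
    simp
  set σ : Equiv.Perm (Fin d) := Equiv.swap 0 j with hσ
  set P : Matrix (Fin d) (Fin d) F := σ.permMatrix F with hP
  have hPcol : P *ᵥ (Pi.single (0 : Fin d) 1 : Fin d → F) = u := by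
    funext k
    simp only [hP, hu, mulVec, dotProduct, PEquiv.toMatrix_apply, Equiv.toPEquiv_apply,
      Option.mem_def, Option.some_inj, Equiv.Perm.permMatrix, Pi.single_apply]
    rw [Finset.sum_eq_single (σ k)]
    · simp only [if_pos rfl, one_mul]
      have : σ k = 0 ↔ k = j := by
        constructor
        · intro h; have := congrArg σ h; simpa [hσ, Equiv.swap_apply_right] using this
        · intro h; subst h; simp [hσ, Equiv.swap_apply_right]
      by_cases h : σ k = 0
      · simp [h, this.mp h, hσ, Equiv.swap_apply_right]
      · have hkj : k ≠ j := fun hc => h (this.mpr hc)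
        simp [h, hkj]
    · intro b _ hb; simp [Ne.symm hb]
    · intro h; simp at h
  have hdetP : IsUnit P.det := by
    rw [hP, det_permutation]
    rcases Int.units_eq_one_or (Equiv.Perm.sign σ) with h | h <;> rw [h] <;> simp
  have hdetBP : (B * P).det ≠ 0 := by
    rw [det_mul, hdetB]
    exact mul_ne_zero hj (IsUnit.ne_zero hdetP)
  set c : F := ((B * P).det)⁻¹ with hc
  set Dm : Matrix (Fin d) (Fin d) F := diagonal (fun k => if k = 1 then c else 1) with hD
  have hdetD : Dm.det = c := by
    rw [hD, det_diagonal]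
    rw [Finset.prod_ite_eq' Finset.univ (1 : Fin d) (fun _ => c)]
    simp
  have hDcol : Dm *ᵥ (Pi.single (0 : Fin d) 1 : Fin d → F) = Pi.single (0 : Fin d) 1 := by
    funext k
    simp only [hD, mulVec_diagonal]
    by_cases h : k = 0
    · subst h; simp [h01]
    · simp [Pi.single_apply, h]
  refine ⟨⟨B * P * Dm, ?_⟩, ?_⟩
  · rw [det_mul, hdetD, hc]
    exact mul_inv_cancel₀ hdetBP
  · show (B * P * Dm) *ᵥ e0 d F = w
    rw [e0_eq, ← mulVec_mulVec, ← mulVec_mulVec, hDcol, hPcol, hBcol]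

end trans

section conj

lemma conjU (A : Matrix.SpecialLinearGroup (Fin d) F) :
    embedHom A * Eb d F * embedHom A⁻¹ = Umat (A.1 *ᵥ e0 d F) := by
  have hAB : A.1 * (A⁻¹ : Matrix.SpecialLinearGroup (Fin d) F).1 = 1 := by
    have h := congrArg Subtype.val (mul_inv_cancel A)
    rwa [Matrix.SpecialLinearGroup.coe_mul, Matrix.SpecialLinearGroup.coe_one] at h
  apply Subtype.ext
  rw [Matrix.SpecialLinearGroup.coe_mul, Matrix.SpecialLinearGroup.coe_mul, embedHom_coe,
    embedHom_coe, show ((Eb d F : Matrix (ιd d) (ιd d) F)) = fromBlocks 1 (replicateCol (Fin 1) (e0 d F)) 0 1 from rfl,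
    Umat_coe, fromBlocks_multiply, fromBlocks_multiply]
  simp only [Matrix.mul_one, Matrix.one_mul, Matrix.mul_zero, Matrix.zero_mul, add_zero,
    zero_add]
  rw [hAB, mul_col']

end conj

/-- g is a word h₁ E h₂ E h₃ with hᵢ block diagonal -/
def IsWcol (g : Matrix.SpecialLinearGroup (ιd d) F) : Prop :=
  ∃ a b c : Matrix.SpecialLinearGroup (Fin d) F,
    g = embedHom a * Eb d F * embedHom b * Eb d F * embedHom c

def IsWrow (g : Matrix.SpecialLinearGroup (ιd d) F) : Prop :=
  ∃ a b c : Matrix.SpecialLinearGroup (Fin d) F,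
    g = embedHom a * E'b d F * embedHom b * E'b d F * embedHom c

lemma isWcol_Umat (hd : 2 ≤ d) (x : Fin d → F) : IsWcol (Umat x) := by
  haveI : NeZero d := ⟨by omega⟩
  have h01 : (0 : Fin d) ≠ 1 := by
    have hv1 : ((1 : Fin d) : ℕ) = 1 := by
      rw [Fin.val_one']; exact Nat.mod_eq_of_lt (by omega)
    intro hc
    rw [Fin.ext_iff, Fin.val_zero, hv1] at hc
    exact absurd hc (by omega)
  obtain ⟨v, hv0, hxv⟩ : ∃ v : Fin d → F, v ≠ 0 ∧ x - v ≠ 0 := by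
    by_cases h : x = Pi.single 0 1
    · refine ⟨Pi.single 1 1, ?_, ?_⟩
      · intro hc
        have := congrFun hc 1
        simp at this
      · subst h
        intro hc
        have := congrFun hc 0
        simp [Pi.single_apply, Ne.symm h01] at this
    · refine ⟨Pi.single 0 1, ?_, ?_⟩
      · intro hc
        have := congrFun hc 0
        simp at this
      · intro hc
        exact h (by rwa [sub_eq_zero] at hc)
  obtain ⟨A₁, hA₁⟩ := exists_SL_mulVec hd v hv0
  obtain ⟨A₂, hA₂⟩ := exists_SL_mulVec hd (x - v) hxv
  refine ⟨A₁, A₁⁻¹ * A₂, A₂⁻¹, ?_⟩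
  have e1 : embedHom A₁ * Eb d F * embedHom A₁⁻¹ = Umat v := by rw [conjU, hA₁]
  have e2 : embedHom A₂ * Eb d F * embedHom A₂⁻¹ = Umat (x - v) := by rw [conjU, hA₂]
  have : Umat x = Umat v * Umat (x - v) := by rw [Umat_mul]; ring_nf
  rw [this, ← e1, ← e2, _root_.map_mul]
  group

section transposes

def slT {n : Type*} [Fintype n] [DecidableEq n] (g : Matrix.SpecialLinearGroup n F) :
    Matrix.SpecialLinearGroup n F := ⟨g.1ᵀ, by rw [det_transpose]; exact g.2⟩

lemma slT_mul {n : Type*} [Fintype n] [DecidableEq n] (g h : Matrix.SpecialLinearGroup n F) :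
    slT (g * h) = slT h * slT g :=
  Subtype.ext (by simp [slT, transpose_mul, Matrix.SpecialLinearGroup.coe_mul]; rfl)

lemma slT_embed (A : Matrix.SpecialLinearGroup (Fin d) F) :
    slT (embedHom A) = embedHom (slT A) := by
  apply Subtype.ext
  simp only [slT, embedHom_coe, fromBlocks_transpose]
  simp [embedHom_coe]
  rfl

lemma slT_Umat (x : Fin d → F) : slT (Umat x) = Lmat x := by
  apply Subtype.ext
  simp only [slT, Umat_coe, Lmat_coe, fromBlocks_transpose, transpose_replicateCol, transpose_one]
  simp

lemma slT_Eb : slT (Eb d F) = E'b d F := slT_Umat _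

lemma isWrow_Lmat (hd : 2 ≤ d) (y : Fin d → F) : IsWrow (Lmat y) := by
  obtain ⟨a, b, c, h⟩ := isWcol_Umat hd y
  refine ⟨slT c, slT b, slT a, ?_⟩
  have := congrArg slT h
  rw [slT_Umat] at this
  rw [this]
  simp only [slT_mul, slT_embed, slT_Eb]
  group

end transposes

section lastrow

/-- last row of a matrix in the block world -/
def lastRow (g : Matrix.SpecialLinearGroup (ιd d) F) : ιd d → F :=
  fun k => g.1 (Sum.inr 0) k

lemma lastRow_mul_U_inl (g : Matrix.SpecialLinearGroup (ιd d) F) (x : Fin d → F) (j : Fin d) :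
    lastRow (g * Umat x) (Sum.inl j) = lastRow g (Sum.inl j) := by
  simp only [lastRow, Matrix.SpecialLinearGroup.coe_mul, mul_apply, Umat_coe]
  rw [Fintype.sum_sum_type]
  simp [fromBlocks_apply₁₁, fromBlocks_apply₂₁, one_apply, mul_ite, Finset.sum_ite_eq']

lemma lastRow_mul_U_inr (g : Matrix.SpecialLinearGroup (ιd d) F) (x : Fin d → F) (p : Fin 1) :
    lastRow (g * Umat x) (Sum.inr p)
      = (∑ i, lastRow g (Sum.inl i) * x i) + lastRow g (Sum.inr p) := by
  simp only [lastRow, Matrix.SpecialLinearGroup.coe_mul, mul_apply, Umat_coe]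
  rw [Fintype.sum_sum_type]
  have h0 : ∀ q : Fin 1, q = p := fun q => Subsingleton.elim q p
  simp [fromBlocks_apply₁₂, fromBlocks_apply₂₂, replicateCol_apply, one_apply, h0 0]

lemma lastRow_mul_L_inl (g : Matrix.SpecialLinearGroup (ιd d) F) (y : Fin d → F) (j : Fin d) :
    lastRow (g * Lmat y) (Sum.inl j)
      = lastRow g (Sum.inl j) + lastRow g (Sum.inr 0) * y j := by
  simp only [lastRow, Matrix.SpecialLinearGroup.coe_mul, mul_apply, Lmat_coe]
  rw [Fintype.sum_sum_type]
  simp [fromBlocks_apply₁₁, fromBlocks_apply₂₁, replicateRow_apply, one_apply, mul_ite,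
    Finset.sum_ite_eq']

lemma lastRow_mul_L_inr (g : Matrix.SpecialLinearGroup (ιd d) F) (y : Fin d → F) (p : Fin 1) :
    lastRow (g * Lmat y) (Sum.inr p) = lastRow g (Sum.inr p) := by
  simp only [lastRow, Matrix.SpecialLinearGroup.coe_mul, mul_apply, Lmat_coe]
  rw [Fintype.sum_sum_type]
  have h0 : ∀ q : Fin 1, q = p := fun q => Subsingleton.elim q p
  simp [fromBlocks_apply₁₂, fromBlocks_apply₂₂, one_apply, h0 0]

lemma lastRow_ne_zero (g : Matrix.SpecialLinearGroup (ιd d) F) : lastRow g ≠ 0 := by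
  intro hc
  have : (g.1).det = 0 :=
    det_eq_zero_of_row_eq_zero (Sum.inr 0) (fun k => congrFun hc k)
  rw [g.2] at this
  exact one_ne_zero this

end lastrow

section reduce

lemma reduce (hd : 2 ≤ d) (g : Matrix.SpecialLinearGroup (ιd d) F) :
    ∃ x1 y1 x2 y2 : Fin d → F,
      lastRow (g * Umat x1 * Lmat y1 * Umat x2 * Lmat y2) = Pi.single (Sum.inr 0) 1 := by
  haveI : NeZero d := ⟨by omega⟩
  -- Step A : make the corner entry nonzero
  obtain ⟨x1, hx1⟩ : ∃ x1, lastRow (g * Umat x1) (Sum.inr 0) ≠ 0 := by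
    by_cases hs : lastRow g (Sum.inr 0) = 0
    · have hr : ∃ j, lastRow g (Sum.inl j) ≠ 0 := by
        by_contra hcon
        push_neg at hcon
        apply lastRow_ne_zero g
        funext k
        cases k with
        | inl j => exact hcon j
        | inr p =>
            have : p = 0 := Subsingleton.elim p 0
            rw [this]; exact hs
      obtain ⟨j, hj⟩ := hr
      refine ⟨(Pi.single j (lastRow g (Sum.inl j))⁻¹ : Fin d → F), ?_⟩
      rw [lastRow_mul_U_inr, hs, add_zero]
      have : (∑ i, lastRow g (Sum.inl i) * (Pi.single j (lastRow g (Sum.inl j))⁻¹ : Fin d → F) i)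
          = lastRow g (Sum.inl j) * (lastRow g (Sum.inl j))⁻¹ := by
        rw [Finset.sum_eq_single j]
        · simp
        · intro b _ hb; simp [Pi.single_apply, hb]
        · intro h; simp at h
      rw [this, mul_inv_cancel₀ hj]
      exact one_ne_zero
    · refine ⟨0, ?_⟩
      rw [lastRow_mul_U_inr]
      simpa using hs
  set g1 := g * Umat x1 with hg1
  set s := lastRow g1 (Sum.inr 0) with hs1
  -- Step B : fix the inl part of the last row to e₀
  set y1 : Fin d → F := fun j => s⁻¹ * ((Pi.single (0 : Fin d) 1 : Fin d → F) j
    - lastRow g1 (Sum.inl j)) with hy1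
  set g2 := g1 * Lmat y1 with hg2
  have h2inl : ∀ j, lastRow g2 (Sum.inl j) = (Pi.single (0 : Fin d) 1 : Fin d → F) j := by
    intro j
    rw [hg2, lastRow_mul_L_inl, hy1]
    simp only [← hs1]
    rw [← mul_assoc, mul_inv_cancel₀ hx1, one_mul]
    ring
  have h2inr : lastRow g2 (Sum.inr 0) = s := by
    rw [hg2, lastRow_mul_L_inr, hs1]
  -- Step C : fix the corner to 1
  set x2 : Fin d → F := Pi.single (0 : Fin d) (1 - s) with hx2
  set g3 := g2 * Umat x2 with hg3
  have h3inl : ∀ j, lastRow g3 (Sum.inl j) = (Pi.single (0 : Fin d) 1 : Fin d → F) j := by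
    intro j
    rw [hg3, lastRow_mul_U_inl]
    exact h2inl j
  have h3inr : lastRow g3 (Sum.inr 0) = 1 := by
    rw [hg3, lastRow_mul_U_inr, h2inr]
    have : (∑ i, lastRow g2 (Sum.inl i) * x2 i) = 1 - s := by
      rw [Finset.sum_eq_single (0 : Fin d)]
      · rw [h2inl, hx2]; simp
      · intro b _ hb
        rw [h2inl, hx2]
        simp [Pi.single_apply, hb]
      · intro h; simp at h
    rw [this]
    ring
  -- Step D : clear the inl part
  set y2 : Fin d → F := -(Pi.single (0 : Fin d) 1 : Fin d → F) with hy2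
  refine ⟨x1, y1, x2, y2, ?_⟩
  have hg4 : g * Umat x1 * Lmat y1 * Umat x2 * Lmat y2 = g3 * Lmat y2 := by
    rw [hg3, hg2, hg1]
  rw [hg4]
  funext k
  cases k with
  | inl j =>
      rw [lastRow_mul_L_inl, h3inl j, h3inr, hy2]
      simp [Pi.single_apply]
  | inr p =>
      have hp : p = 0 := Subsingleton.elim p 0
      subst hp
      rw [lastRow_mul_L_inr, h3inr]
      simp

end reduce

section pcol

lemma pcol_decomp (g : Matrix.SpecialLinearGroup (ιd d) F)
    (hg : lastRow g = Pi.single (Sum.inr 0) 1) :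
    ∃ (A : Matrix.SpecialLinearGroup (Fin d) F) (x : Fin d → F), g = embedHom A * Umat x := by
  set A0 : Matrix (Fin d) (Fin d) F := of fun i j => g.1 (Sum.inl i) (Sum.inl j) with hA0
  set v : Fin d → F := fun i => g.1 (Sum.inl i) (Sum.inr 0) with hv
  have hblocks : g.1 = fromBlocks A0 (replicateCol (Fin 1) v) 0 1 := by
    ext k l
    cases k with
    | inl i =>
        cases l with
        | inl j => simp [hA0, fromBlocks_apply₁₁]
        | inr q =>
            have hq : q = 0 := Subsingleton.elim q 0
            subst hq
            simp [hv, fromBlocks_apply₁₂, replicateCol_apply]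
    | inr p =>
        have hp : p = 0 := Subsingleton.elim p 0
        subst hp
        cases l with
        | inl j =>
            have := congrFun hg (Sum.inl j)
            simp only [lastRow] at this
            rw [this]
            simp [fromBlocks_apply₂₁, Pi.single_apply]
        | inr q =>
            have hq : q = 0 := Subsingleton.elim q 0
            subst hq
            have := congrFun hg (Sum.inr 0)
            simp only [lastRow] at this
            rw [this]
            simp [fromBlocks_apply₂₂, one_apply]
  have hdetA : A0.det = 1 := by
    have := g.2
    rw [hblocks, det_fromBlocks_zero₂₁] at this
    simpa using this
  set A : Matrix.SpecialLinearGroup (Fin d) F := ⟨A0, hdetA⟩ with hA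
  have hAinv : A0 * ((A⁻¹ : Matrix.SpecialLinearGroup (Fin d) F) : Matrix (Fin d) (Fin d) F)
      = 1 := by
    have h := congrArg Subtype.val (mul_inv_cancel A)
    rwa [Matrix.SpecialLinearGroup.coe_mul, Matrix.SpecialLinearGroup.coe_one] at h
  refine ⟨A, ((A⁻¹ : Matrix.SpecialLinearGroup (Fin d) F) : Matrix (Fin d) (Fin d) F) *ᵥ v, ?_⟩
  apply Subtype.ext
  rw [Matrix.SpecialLinearGroup.coe_mul, embedHom_coe, Umat_coe, fromBlocks_multiply]
  simp only [Matrix.mul_one, Matrix.one_mul, Matrix.mul_zero, Matrix.zero_mul, add_zero,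
    zero_add]
  rw [mul_col', mulVec_mulVec, hAinv, one_mulVec]
  exact hblocks

end pcol

section master

/-- Master decomposition in the block world: every element of `SL(d+1)` is a fixed-shape word in
block-diagonal elements and the two fixed transvections `Eb`, `E'b`. -/
lemma masterSum (hd : 2 ≤ d) (g : Matrix.SpecialLinearGroup (ιd d) F) :
    ∃ a0 a1 a2 a3 a4 a5 a6 a7 a8 a9 a10 a11 a12 a13 a14 :
        Matrix.SpecialLinearGroup (Fin d) F,
      g = embedHom a0 * Eb d F * embedHom a1 * Eb d F * embedHom a2
        * embedHom a3 * E'b d F * embedHom a4 * E'b d F * embedHom a5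
        * embedHom a6 * Eb d F * embedHom a7 * Eb d F * embedHom a8
        * embedHom a9 * E'b d F * embedHom a10 * E'b d F * embedHom a11
        * embedHom a12 * Eb d F * embedHom a13 * Eb d F * embedHom a14 := by
  obtain ⟨x1, y1, x2, y2, hred⟩ := reduce hd g
  obtain ⟨A, x, hAx⟩ := pcol_decomp _ hred
  have hgeq : g = (embedHom A * Umat x) * Lmat (-y2) * Umat (-x2) * Lmat (-y1) * Umat (-x1) := by
    rw [← Lmat_inv, ← Umat_inv, ← Lmat_inv, ← Umat_inv, ← hAx]
    group
  obtain ⟨p0, p1, p2, hUx⟩ := isWcol_Umat hd x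
  obtain ⟨q0, q1, q2, hLy2⟩ := isWrow_Lmat hd (-y2)
  obtain ⟨r0, r1, r2, hUx2⟩ := isWcol_Umat hd (-x2)
  obtain ⟨s0, s1, s2, hLy1⟩ := isWrow_Lmat hd (-y1)
  obtain ⟨t0, t1, t2, hUx1⟩ := isWcol_Umat hd (-x1)
  refine ⟨A * p0, p1, p2, q0, q1, q2, r0, r1, r2, s0, s1, s2, t0, t1, t2, ?_⟩
  rw [hgeq, hUx, hLy2, hUx2, hLy1, hUx1, _root_.map_mul]
  group

end master

section transport

variable (d F) in
/-- reindexing equivalence of special linear groups -/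
def SLe : Matrix.SpecialLinearGroup (ιd d) F ≃* Matrix.SpecialLinearGroup (Fin (d + 1)) F where
  toFun g := ⟨reindex finSumFinEquiv finSumFinEquiv g.1, by
    rw [det_reindex_self]; exact g.2⟩
  invFun g := ⟨reindex finSumFinEquiv.symm finSumFinEquiv.symm g.1, by
    rw [det_reindex_self]; exact g.2⟩
  left_inv g := Subtype.ext (by simp)
  right_inv g := Subtype.ext (by simp)
  map_mul' g h := Subtype.ext (by
    simp only [Matrix.SpecialLinearGroup.coe_mul, reindex_apply]
    rw [← submatrix_mul_equiv _ _ _ finSumFinEquiv.symm]; rfl)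

lemma SLe_coe (g : Matrix.SpecialLinearGroup (ιd d) F) :
    (SLe d F g : Matrix (Fin (d + 1)) (Fin (d + 1)) F)
      = reindex finSumFinEquiv finSumFinEquiv g.1 := rfl

lemma embedMat_apply_sum (A : Matrix (Fin d) (Fin d) F) (k l : ιd d) :
    embedMat A (finSumFinEquiv k) (finSumFinEquiv l) = fromBlocks A 0 0 1 k l := by
  cases k with
  | inl ii =>
      cases l with
      | inl jj =>
          simp only [finSumFinEquiv_apply_left, embedMat, of_apply, Fin.coe_castAdd,
            fromBlocks_apply₁₁]
          rw [dif_pos ii.isLt, dif_pos jj.isLt]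
      | inr pj =>
          have hpj : ¬ ((Fin.natAdd d pj : Fin (d + 1)) : ℕ) < d := by
            simp
          simp only [finSumFinEquiv_apply_left, finSumFinEquiv_apply_right, embedMat, of_apply,
            Fin.coe_castAdd, fromBlocks_apply₁₂]
          rw [dif_pos ii.isLt, dif_neg hpj]
          simp
  | inr pi =>
      have hpi : ¬ ((Fin.natAdd d pi : Fin (d + 1)) : ℕ) < d := by
        simp
      cases l with
      | inl jj =>
          simp only [finSumFinEquiv_apply_left, finSumFinEquiv_apply_right, embedMat, of_apply,
            fromBlocks_apply₂₁]
          rw [dif_neg hpi, if_pos (by simpa using jj.isLt : ((Fin.castAdd 1 jj : Fin (d+1)) : ℕ) < d)]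
          simp
      | inr pj =>
          simp only [finSumFinEquiv_apply_right, embedMat, of_apply, fromBlocks_apply₂₂]
          rw [dif_neg hpi, if_neg (by simp)]
          have : pi = pj := Subsingleton.elim pi pj
          subst this
          rw [one_apply_eq]

lemma embedMat_eq (A : Matrix (Fin d) (Fin d) F) :
    embedMat A = reindex finSumFinEquiv finSumFinEquiv (fromBlocks A 0 0 1) := by
  ext i j
  rw [reindex_apply, submatrix_apply]
  conv_lhs => rw [← Equiv.apply_symm_apply finSumFinEquiv i,
    ← Equiv.apply_symm_apply finSumFinEquiv j]
  exact embedMat_apply_sum A _ _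

variable (d F) in
/-- block-diagonal embedding into `SL(d+1)` over `Fin` indices -/
def embedHomF : Matrix.SpecialLinearGroup (Fin d) F →* Matrix.SpecialLinearGroup (Fin (d + 1)) F :=
  (SLe d F).toMonoidHom.comp embedHom

lemma embedHomF_coe (A : Matrix.SpecialLinearGroup (Fin d) F) :
    (embedHomF d F A : Matrix (Fin (d + 1)) (Fin (d + 1)) F) = embedMat (A : Matrix (Fin d) (Fin d) F) := by
  rw [embedMat_eq]
  rfl

variable (d F) in
def EFin : Matrix.SpecialLinearGroup (Fin (d + 1)) F := SLe d F (Eb d F)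

variable (d F) in
def E'Fin : Matrix.SpecialLinearGroup (Fin (d + 1)) F := SLe d F (E'b d F)

lemma masterFin (hd : 2 ≤ d) (g : Matrix.SpecialLinearGroup (Fin (d + 1)) F) :
    ∃ a0 a1 a2 a3 a4 a5 a6 a7 a8 a9 a10 a11 a12 a13 a14 :
        Matrix.SpecialLinearGroup (Fin d) F,
      g = embedHomF d F a0 * EFin d F * embedHomF d F a1 * EFin d F * embedHomF d F a2
        * embedHomF d F a3 * E'Fin d F * embedHomF d F a4 * E'Fin d F * embedHomF d F a5
        * embedHomF d F a6 * EFin d F * embedHomF d F a7 * EFin d F * embedHomF d F a8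
        * embedHomF d F a9 * E'Fin d F * embedHomF d F a10 * E'Fin d F * embedHomF d F a11
        * embedHomF d F a12 * EFin d F * embedHomF d F a13 * EFin d F * embedHomF d F a14 := by
  obtain ⟨a0, a1, a2, a3, a4, a5, a6, a7, a8, a9, a10, a11, a12, a13, a14, h⟩ :=
    masterSum hd ((SLe d F).symm g)
  refine ⟨a0, a1, a2, a3, a4, a5, a6, a7, a8, a9, a10, a11, a12, a13, a14, ?_⟩
  have := congrArg (SLe d F) h
  rw [MulEquiv.apply_symm_apply] at this
  simpa only [_root_.map_mul, embedHomF, EFin, E'Fin, MonoidHom.comp_apply,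
    MulEquiv.coe_toMonoidHom] using this

end transport

end Prod14

set_option maxHeartbeats 2000000 in
/-- `∏ n, SL(dₙ + 1, Fₙ)` is finitely generated over the subgroup `∏ n, SL(dₙ, Fₙ)`
(embedded block-diagonally as `A ↦ diag(A, 1)`). -/
theorem stmt_14 (d : ℕ → ℕ) (hd : ∀ n, 2 ≤ d n) (F : ℕ → Type*)
    [∀ n, Field (F n)] [∀ n, Fintype (F n)] :
    ∃ S : Finset (∀ n, Matrix.SpecialLinearGroup (Fin (d n + 1)) (F n)),
      Subgroup.closure
        ({g : ∀ n, Matrix.SpecialLinearGroup (Fin (d n + 1)) (F n) |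
            ∀ n, ∃ A : Matrix.SpecialLinearGroup (Fin (d n)) (F n),
              (g n : Matrix (Fin (d n + 1)) (Fin (d n + 1)) (F n)) =
                embedMat (A : Matrix (Fin (d n)) (Fin (d n)) (F n))}
          ∪ (S : Set (∀ n, Matrix.SpecialLinearGroup (Fin (d n + 1)) (F n)))) = ⊤ := by
  classical
  set E : ∀ n, Matrix.SpecialLinearGroup (Fin (d n + 1)) (F n) :=
    fun n => Prod14.EFin (d n) (F n) with hE_def
  set E' : ∀ n, Matrix.SpecialLinearGroup (Fin (d n + 1)) (F n) :=
    fun n => Prod14.E'Fin (d n) (F n) with hE'_def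
  refine ⟨{E, E'}, ?_⟩
  set X : Set (∀ n, Matrix.SpecialLinearGroup (Fin (d n + 1)) (F n)) :=
    ({g : ∀ n, Matrix.SpecialLinearGroup (Fin (d n + 1)) (F n) |
        ∀ n, ∃ A : Matrix.SpecialLinearGroup (Fin (d n)) (F n),
          (g n : Matrix (Fin (d n + 1)) (Fin (d n + 1)) (F n)) =
            embedMat (A : Matrix (Fin (d n)) (Fin (d n)) (F n))}
      ∪ (({E, E'} : Finset _) : Set (∀ n, Matrix.SpecialLinearGroup (Fin (d n + 1)) (F n))))
    with hX
  rw [eq_top_iff]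
  rintro g -
  choose a0 a1 a2 a3 a4 a5 a6 a7 a8 a9 a10 a11 a12 a13 a14 hw using
    fun n => Prod14.masterFin (hd n) (g n)
  have hmem : ∀ (b : ∀ n, Matrix.SpecialLinearGroup (Fin (d n)) (F n)),
      (fun n => Prod14.embedHomF (d n) (F n) (b n)) ∈ Subgroup.closure X := by
    intro b
    apply Subgroup.subset_closure
    rw [hX]
    exact Or.inl (fun n => ⟨b n, Prod14.embedHomF_coe _⟩)
  have hE : E ∈ Subgroup.closure X := by
    apply Subgroup.subset_closure
    rw [hX]
    exact Or.inr (by simp)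
  have hE' : E' ∈ Subgroup.closure X := by
    apply Subgroup.subset_closure
    rw [hX]
    exact Or.inr (by simp)
  have hgeq : g
      = (fun n => Prod14.embedHomF (d n) (F n) (a0 n)) * E
        * (fun n => Prod14.embedHomF (d n) (F n) (a1 n)) * E
        * (fun n => Prod14.embedHomF (d n) (F n) (a2 n))
        * (fun n => Prod14.embedHomF (d n) (F n) (a3 n)) * E'
        * (fun n => Prod14.embedHomF (d n) (F n) (a4 n)) * E'
        * (fun n => Prod14.embedHomF (d n) (F n) (a5 n))
        * (fun n => Prod14.embedHomF (d n) (F n) (a6 n)) * E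
        * (fun n => Prod14.embedHomF (d n) (F n) (a7 n)) * E
        * (fun n => Prod14.embedHomF (d n) (F n) (a8 n))
        * (fun n => Prod14.embedHomF (d n) (F n) (a9 n)) * E'
        * (fun n => Prod14.embedHomF (d n) (F n) (a10 n)) * E'
        * (fun n => Prod14.embedHomF (d n) (F n) (a11 n))
        * (fun n => Prod14.embedHomF (d n) (F n) (a12 n)) * E
        * (fun n => Prod14.embedHomF (d n) (F n) (a13 n)) * E
        * (fun n => Prod14.embedHomF (d n) (F n) (a14 n)) := by
    funext n
    simp only [Pi.mul_apply, hE_def, hE'_def]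
    exact hw n
  rw [hgeq]
  repeat' apply Subgroup.mul_mem
  all_goals first | exact hmem _ | exact hE | exact hE'
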